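/- Let (J,B) be a pseudo-Euclidean Jordan algebra over ℂ whose product is not identically zero (non-Abelian). Then there exist subspaces z and l of J such that J = z ⊕ l, B(z,l) = 0, the restrictions of B to z × z and to l × l are non-degenerate, z ⊆ Ann(J) (so z·J = 0), l is an ideal of J, l ≠ {0}, and l is reduced, i.e. its annulator Ann(l) = {x ∈ l : x·l = 0} is totally isotropic for B (B vanishes on Ann(l) × Ann(l)). -/

import Mathlib

/-- A non-Abelian pseudo-Euclidean Jordan algebra decomposes as an
orthogonal direct sum J = z ⊕ l with z contained in the annulator and l a nonzero
reduced (non-degenerate) ideal. -/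
theorem stmt2
    {J : Type*} [AddCommGroup J] [Module ℂ J] [FiniteDimensional ℂ J]
    (mul : J →ₗ[ℂ] J →ₗ[ℂ] J)
    (hcomm : ∀ x y : J, mul x y = mul y x)
    (hjordan : ∀ x y : J, mul (mul x y) (mul x x) = mul x (mul y (mul x x)))
    (B : J →ₗ[ℂ] J →ₗ[ℂ] ℂ)
    (hBsymm : ∀ x y : J, B x y = B y x)
    (hBnondeg : ∀ x : J, (∀ y : J, B x y = 0) → x = 0)
    (hBassoc : ∀ x y z : J, B (mul x y) z = B x (mul y z))
    (hnonab : ∃ x y : J, mul x y ≠ 0) :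
    ∃ Z L : Submodule ℂ J,
      IsCompl Z L ∧
      (∀ x ∈ Z, ∀ y ∈ L, B x y = 0) ∧
      (∀ x ∈ Z, (∀ y ∈ Z, B x y = 0) → x = 0) ∧
      (∀ x ∈ L, (∀ y ∈ L, B x y = 0) → x = 0) ∧
      (∀ x ∈ Z, ∀ y : J, mul x y = 0) ∧
      (∀ x ∈ L, ∀ y : J, mul y x ∈ L) ∧
      L ≠ ⊥ ∧
      (∀ x ∈ L, (∀ y ∈ L, mul x y = 0) →
        ∀ x' ∈ L, (∀ y ∈ L, mul x' y = 0) → B x x' = 0) := by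
  classical
  have hrefl : B.IsRefl := fun x y h => by rw [hBsymm]; exact h
  -- the annulator of J
  set Ann : Submodule ℂ J := ⨅ y : J, LinearMap.ker (mul.flip y) with hAnnDef
  have hmemAnn : ∀ x : J, x ∈ Ann ↔ ∀ y : J, mul x y = 0 := by
    intro x
    simp [hAnnDef, Submodule.mem_iInf, LinearMap.mem_ker]
  -- the radical of B restricted to Ann
  set rad : Submodule ℂ J := Ann ⊓ LinearMap.BilinForm.orthogonal B Ann with hradDef
  have hradAnn : rad ≤ Ann := inf_le_left
  -- choose a complement Z of rad inside Ann
  obtain ⟨Z', hZ'⟩ := Submodule.exists_isCompl (rad.comap Ann.subtype)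
  set Z : Submodule ℂ J := Z'.map Ann.subtype with hZDef
  have hZAnn : Z ≤ Ann := by
    rintro x ⟨a, _, rfl⟩; exact a.2
  -- every element of Ann decomposes as z + r
  have hdecomp : ∀ a ∈ Ann, ∃ z ∈ Z, ∃ r ∈ rad, a = z + r := by
    intro a ha
    have : (⟨a, ha⟩ : Ann) ∈ rad.comap Ann.subtype ⊔ Z' := by
      rw [hZ'.sup_eq_top]; trivial
    obtain ⟨r, hr, z, hz, hzr⟩ := Submodule.mem_sup.1 this
    rw [add_comm] at hzr
    refine ⟨z, ⟨z, hz, rfl⟩, r, hr, ?_⟩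
    have := congrArg (Ann.subtype) hzr
    simpa using this.symm
  -- B restricted to Z is nondegenerate
  have hZnondeg : ∀ x ∈ Z, (∀ y ∈ Z, B x y = 0) → x = 0 := by
    rintro x ⟨a, haZ, rfl⟩ hx
    have haAnnOrth : (a : J) ∈ LinearMap.BilinForm.orthogonal B Ann := by
      intro n hn
      obtain ⟨z, hzZ, r, hr, rfl⟩ := hdecomp n hn
      have h1 : B (z + r) (a : J) = B z (a : J) + B r (a : J) := by
        simp
      have h2 : B z (a : J) = 0 := by
        rw [hBsymm]; exact hx z hzZ
      have h3 : B r (a : J) = 0 := by rw [hBsymm]; exact hr.2 _ a.2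
      simpa [LinearMap.BilinForm.IsOrtho, h1, h2] using h3
    have : a ∈ Z' ⊓ rad.comap Ann.subtype := ⟨haZ, ⟨a.2, haAnnOrth⟩⟩
    rw [(hZ'.symm).inf_eq_bot] at this
    simpa using congrArg (Ann.subtype) this
  -- hence Z and its orthogonal L are complementary
  have hZrest : (LinearMap.BilinForm.restrict B Z).Nondegenerate := by
    refine ⟨?_, ?_⟩
    · intro ⟨x, hx⟩ h
      refine Subtype.ext (hZnondeg x hx fun y hy => ?_)
      simpa using h ⟨y, hy⟩
    · intro ⟨x, hx⟩ h
      refine Subtype.ext (hZnondeg x hx fun y hy => ?_)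
      rw [hBsymm]; simpa using h ⟨y, hy⟩
  set L : Submodule ℂ J := LinearMap.BilinForm.orthogonal B Z with hLDef
  have hcompl : IsCompl Z L :=
    (LinearMap.BilinForm.restrict_nondegenerate_iff_isCompl_orthogonal hrefl).1 hZrest
  have hmemL : ∀ y : J, y ∈ L ↔ ∀ x ∈ Z, B x y = 0 := fun y => Iff.rfl
  -- products land in L
  have hprodL : ∀ x y : J, mul x y ∈ L := by
    intro x y n hn
    have hann := (hmemAnn n).1 (hZAnn hn) x
    have := (hBassoc n x y).symm
    simpa [LinearMap.BilinForm.IsOrtho, hann] using this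
  -- decomposition of arbitrary elements
  have hdecompJ : ∀ w : J, ∃ z ∈ Z, ∃ l ∈ L, w = z + l := by
    intro w
    have : w ∈ Z ⊔ L := by rw [hcompl.sup_eq_top]; trivial
    obtain ⟨z, hz, l, hl, hzl⟩ := Submodule.mem_sup.1 this
    exact ⟨z, hz, l, hl, hzl.symm⟩
  refine ⟨Z, L, hcompl, ?_, hZnondeg, ?_, ?_, fun x _ y => hprodL y x, ?_, ?_⟩
  · intro x hx y hy; exact hy x hx
  · -- L nondegenerate
    intro x hx h
    refine hBnondeg x fun w => ?_
    obtain ⟨z, hz, l, hl, rfl⟩ := hdecompJ w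
    have h1 : B x z = 0 := by rw [hBsymm]; exact hx z hz
    have h2 : B x l = 0 := h l hl
    simp [h1, h2]
  · -- Z annihilates
    intro x hx y
    exact (hmemAnn x).1 (hZAnn hx) y
  · -- L ≠ ⊥
    obtain ⟨x, y, hxy⟩ := hnonab
    intro hbot
    exact hxy (by simpa [hbot] using hprodL x y)
  · -- Ann(L) totally isotropic
    intro x hxL hx x' hx'L hx'
    have hxAnn : x ∈ Ann := by
      rw [hmemAnn]
      intro w
      obtain ⟨z, hz, l, hl, rfl⟩ := hdecompJ w
      have h1 : mul x z = 0 := by rw [hcomm]; exact (hmemAnn z).1 (hZAnn hz) x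
      have h2 : mul x l = 0 := hx l hl
      simp [h1, h2]
    have hx'Ann : x' ∈ Ann := by
      rw [hmemAnn]
      intro w
      obtain ⟨z, hz, l, hl, rfl⟩ := hdecompJ w
      have h1 : mul x' z = 0 := by rw [hcomm]; exact (hmemAnn z).1 (hZAnn hz) x'
      have h2 : mul x' l = 0 := hx' l hl
      simp [h1, h2]
    obtain ⟨z, hz, r, hr, rfl⟩ := hdecomp x' hx'Ann
    have h1 : B x z = 0 := by rw [hBsymm]; exact hxL z hz
    have h2 : B x r = 0 := hr.2 x hxAnn
    simp [h1, h2]
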